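/- In the simplicial setup, let Γ = {b₁, …, b_t} with b₁ ≺ ⋯ ≺ b_t be an equivalence class of B_A. Then for every b ∈ Γ + A there exists a unique monomial x^μ y^ν ∈ M_Γ such that b = Σ_{i=1}^c μ_[i]·a_i + Σ_{i=1}^d ν_[i]·e_i. -/

import Mathlib

namespace SimplicialToric

/-- `eVec d α i` is `α` times the `i`-th standard basis vector of `ℕ^d`. -/
def eVec (d α : ℕ) (i : Fin d) : Fin d → ℕ := fun j => if j = i then α else 0

/-- The Hilbert basis of a submonoid `B ⊆ ℕ^d`: the set of irreducible elements
(in `ℕ^d` the only unit is `0`). -/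
def Hilb {d : ℕ} (B : AddSubmonoid (Fin d → ℕ)) : Set (Fin d → ℕ) :=
  {b | b ∈ B ∧ b ≠ 0 ∧ ∀ x ∈ B, ∀ y ∈ B, b = x + y → x = 0 ∨ y = 0}

/-- The submonoid `A = Σᵢ ℤ≥0·eᵢ = αℤ≥0^d`. -/
def Amon (d α : ℕ) : AddSubmonoid (Fin d → ℕ) :=
  AddSubmonoid.closure (Set.range (eVec d α))

/-- `B_A = {x ∈ B : x − a ∉ B for every a ∈ A \ {0}}`. -/
def BA {d : ℕ} (B : AddSubmonoid (Fin d → ℕ)) (α : ℕ) : Set (Fin d → ℕ) :=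
  {x | x ∈ B ∧ ∀ z ∈ Amon d α, z ≠ 0 → ∀ y ∈ B, x ≠ y + z}

/-- The generators `a₁,…,a_c,e₁,…,e_d` of `B`, indexed by the variables of
`S = K[x₁,…,x_c,y₁,…,y_d]`; variable `Fin.castAdd d i` is `xᵢ`, variable
`Fin.natAdd c j` is `yⱼ`. -/
def gens (c d α : ℕ) (a : Fin c → Fin d → ℕ) : Fin (c + d) → Fin d → ℕ :=
  Fin.addCases a (eVec d α)

/-- The element of `B` represented by the monomial with exponent vector `σ`:
`π(x^μ y^ν) = t^(valE σ)`. -/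
def valE (c d α : ℕ) (a : Fin c → Fin d → ℕ) (σ : Fin (c + d) →₀ ℕ) : Fin d → ℕ :=
  ∑ v : Fin (c + d), σ v • gens c d α a v

/-- total degree of a monomial (exponent vector). -/
def degE {N : ℕ} (σ : Fin N →₀ ℕ) : ℕ := ∑ v, σ v

/-- the graded reverse lexicographic order: `grevlex σ τ` means `σ ≺ τ`,
i.e. `deg σ < deg τ`, or degrees agree and the last nonzero entry of `τ − σ`
is negative. -/
def grevlex {N : ℕ} (σ τ : Fin N →₀ ℕ) : Prop :=
  degE σ < degE τ ∨ (degE σ = degE τ ∧ ∃ k, τ k < σ k ∧ ∀ l, k < l → σ l = τ l)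

/-- `x ∼ y` iff `x − y ∈ gp(A) = αℤ^d`. -/
def Rel {d : ℕ} (α : ℕ) (x y : Fin d → ℕ) : Prop :=
  ∀ j, (α : ℤ) ∣ (x j : ℤ) - (y j : ℤ)

/-- `Γ` is an equivalence class of `B_A` modulo `αℤ^d`. -/
def IsClass {d : ℕ} (B : AddSubmonoid (Fin d → ℕ)) (α : ℕ) (Γ : Set (Fin d → ℕ)) : Prop :=
  ∃ x ∈ BA B α, Γ = {y | y ∈ BA B α ∧ Rel α x y}

/-- the total order on an equivalence class of `B_A`: `b ≺ c` iff the last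
nonzero entry of `b − c` is negative. -/
def ltCls {d : ℕ} (x y : Fin d → ℕ) : Prop :=
  ∃ k, x k < y k ∧ ∀ l, k < l → x l = y l

/-- `joinSub x y = x∨y − y`, where `x∨y` is the componentwise maximum. -/
def joinSub {d : ℕ} (x y : Fin d → ℕ) : Fin d → ℕ := fun j => max (x j) (y j) - y j

/-- the monomial with exponents `σ` lies in `T = K[y₁,…,y_d]`. -/
def yOnly (c d : ℕ) (σ : Fin (c + d) →₀ ℕ) : Prop := ∀ i : Fin c, σ (Fin.castAdd d i) = 0

/-- the monomial with exponents `σ` involves only the `x`-variables. -/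
def xOnly (c d : ℕ) (σ : Fin (c + d) →₀ ℕ) : Prop := ∀ j : Fin d, σ (Fin.natAdd c j) = 0

/-- the set `N₁`, for a given choice `m` of the minimal monomials `m_b`. -/
def N1set (c d α : ℕ) (a : Fin c → Fin d → ℕ) (B : AddSubmonoid (Fin d → ℕ))
    (m : (Fin d → ℕ) → (Fin (c + d) →₀ ℕ)) : Set (Fin (c + d) →₀ ℕ) :=
  {n | ∃ (i : Fin c) (b : Fin d → ℕ), b ∈ BA B α ∧
    n = Finsupp.single (Fin.castAdd d i) 1 + m b ∧ n ≠ m (a i + b)}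

/-- the set `N₂ = ∪_Γ N_Γ`, where `N_Γ = {n(bᵢ,bⱼ) = m_{bⱼ}·m_{bᵢ∨bⱼ−bⱼ} : bᵢ ≺ bⱼ in Γ}`. -/
def N2set {d : ℕ} (c α : ℕ) (B : AddSubmonoid (Fin d → ℕ))
    (m : (Fin d → ℕ) → (Fin (c + d) →₀ ℕ)) : Set (Fin (c + d) →₀ ℕ) :=
  {n | ∃ Γ, IsClass B α Γ ∧ ∃ bi ∈ Γ, ∃ bj ∈ Γ, ltCls bi bj ∧ n = m bj + m (joinSub bi bj)}

/-- `σ` is the exponent vector of the initial (i.e. `≺`-largest) term of `f`. -/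
def IsLeadMon {N : ℕ} {K : Type*} [Field K] (f : MvPolynomial (Fin N) K)
    (σ : Fin N →₀ ℕ) : Prop :=
  σ ∈ f.support ∧ ∀ τ ∈ f.support, τ = σ ∨ grevlex τ σ

/-- the initial ideal of `I` with respect to the graded reverse lexicographic order. -/
noncomputable def initialIdeal {N : ℕ} {K : Type*} [Field K] (I : Ideal (MvPolynomial (Fin N) K)) :
    Ideal (MvPolynomial (Fin N) K) :=
  Ideal.span {g | ∃ f ∈ I, ∃ σ, IsLeadMon f σ ∧ g = MvPolynomial.monomial σ (1 : K)}

end SimplicialToric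

open SimplicialToric

namespace SimplicialToric

/-- For an equivalence class \`Γ\` of \`B_A\` the set
\`M_Γ = ∪_{b ∈ Γ} (m_b·M_T \ ∪_{b' ≺ b in Γ} n(b',b)·M_T)\`. -/
def MGamma (c d α : ℕ) (m : (Fin d → ℕ) → (Fin (c + d) →₀ ℕ)) (Γ : Set (Fin d → ℕ)) :
    Set (Fin (c + d) →₀ ℕ) :=
  {σ | ∃ b ∈ Γ, (∃ τ, yOnly c d τ ∧ σ = m b + τ) ∧
    ∀ b' ∈ Γ, ltCls b' b → ¬ ∃ τ, yOnly c d τ ∧ σ = (m b + m (joinSub b' b)) + τ}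

end SimplicialToric

namespace SimplicialToric

-- ### helpers

variable {c d α : ℕ}

/-- pure y-monomial with exponents `w`. -/
noncomputable def yMon (c : ℕ) {d : ℕ} (w : Fin d → ℕ) : Fin (c + d) →₀ ℕ :=
  Finsupp.equivFunOnFinite.symm (Fin.addCases (fun _ => 0) w)

@[simp] lemma yMon_castAdd (w : Fin d → ℕ) (i : Fin c) :
    yMon c w (Fin.castAdd d i) = 0 := by
  simp [yMon, Finsupp.coe_equivFunOnFinite_symm]

@[simp] lemma yMon_natAdd (w : Fin d → ℕ) (j : Fin d) :
    yMon c w (Fin.natAdd c j) = w j := by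
  simp [yMon, Finsupp.coe_equivFunOnFinite_symm]

lemma yOnly_yMon (w : Fin d → ℕ) : yOnly c d (yMon c w) := fun i => yMon_castAdd w i

lemma yMon_add (w₁ w₂ : Fin d → ℕ) : yMon c (w₁ + w₂) = yMon c w₁ + yMon c w₂ := by
  ext v
  induction v using Fin.addCases with
  | left i => simp
  | right j => simp

lemma eq_yMon_of_yOnly {τ : Fin (c + d) →₀ ℕ} (h : yOnly c d τ) :
    τ = yMon c (fun j => τ (Fin.natAdd c j)) := by
  ext v
  induction v using Fin.addCases with
  | left i => simpa using h i
  | right j => simp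

variable (a : Fin c → Fin d → ℕ)

lemma valE_add (σ τ : Fin (c + d) →₀ ℕ) :
    valE c d α a (σ + τ) = valE c d α a σ + valE c d α a τ := by
  unfold valE
  rw [← Finset.sum_add_distrib]
  refine Finset.sum_congr rfl fun v _ => ?_
  simp [add_smul]

lemma valE_apply (σ : Fin (c + d) →₀ ℕ) (j : Fin d) :
    valE c d α a σ j =
      (∑ i, σ (Fin.castAdd d i) * a i j) + α * σ (Fin.natAdd c j) := by
  unfold valE
  rw [Finset.sum_apply]
  rw [Fin.sum_univ_add (f := fun v => (σ v • gens c d α a v) j)]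
  congr 1
  · refine Finset.sum_congr rfl fun i _ => ?_
    simp [gens]
  · rw [Finset.sum_eq_single j]
    · simp [gens, eVec, mul_comm]
    · intro b _ hb
      simp only [gens, Fin.addCases_right, Pi.smul_apply, eVec, smul_eq_mul]
      rw [if_neg (fun h => hb h.symm), mul_zero]
    · simp

lemma valE_yMon (w : Fin d → ℕ) :
    valE c d α a (yMon c w) = fun j => α * w j := by
  funext j
  rw [valE_apply]
  simp

lemma degE_split (σ : Fin (c + d) →₀ ℕ) :
    degE σ = (∑ i, σ (Fin.castAdd d i)) + ∑ j, σ (Fin.natAdd c j) := by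
  unfold degE
  exact Fin.sum_univ_add _

lemma degE_yMon (w : Fin d → ℕ) : degE (yMon c (d := d) w) = ∑ j, w j := by
  rw [degE_split]; simp

lemma sum_valE (hdeg : ∀ i, ∑ j, a i j = α) (σ : Fin (c + d) →₀ ℕ) :
    ∑ j, valE c d α a σ j = α * degE σ := by
  have h1 : ∑ j, valE c d α a σ j = ∑ v : Fin (c + d), σ v * α := by
    unfold valE
    have : ∀ j : Fin d, (∑ v : Fin (c + d), σ v • gens c d α a v) j
        = ∑ v : Fin (c + d), σ v * gens c d α a v j := fun j => by
      rw [Finset.sum_apply]; rfl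
    simp only [this]
    rw [Finset.sum_comm]
    refine Finset.sum_congr rfl fun v _ => ?_
    rw [← Finset.mul_sum]
    congr 1
    induction v using Fin.addCases with
    | left i => simpa [gens] using hdeg i
    | right j => simp [gens, eVec]
  rw [h1, degE, Finset.mul_sum]
  exact Finset.sum_congr rfl fun v _ => mul_comm _ _


lemma exists_last_diff {n : ℕ} {x y : Fin n → ℕ} (h : ∃ v, x v ≠ y v) :
    ∃ k, x k ≠ y k ∧ ∀ l, k < l → x l = y l := by
  classical
  set F : Finset (Fin n) := Finset.univ.filter (fun v => x v ≠ y v) with hF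
  have hFne : F.Nonempty := by
    obtain ⟨v, hv⟩ := h; exact ⟨v, by simp [hF, hv]⟩
  refine ⟨F.max' hFne, by simpa [hF] using F.max'_mem hFne, ?_⟩
  intro l hl
  by_contra hc
  exact absurd (F.le_max' l (by simp [hF, hc])) (not_le.mpr hl)

lemma grevlex_asymm {N : ℕ} {σ τ : Fin N →₀ ℕ} (h1 : grevlex σ τ) (h2 : grevlex τ σ) : False := by
  rcases h1 with h1 | ⟨hd1, k, hk, hkl⟩
  · rcases h2 with h2 | ⟨hd2, _⟩
    · exact absurd (h1.trans h2) (lt_irrefl _)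
    · exact absurd h1 (by omega)
  · rcases h2 with h2 | ⟨hd2, k', hk', hkl'⟩
    · exact absurd h2 (by omega)
    · rcases lt_trichotomy k k' with h | h | h
      · exact absurd (hkl k' h) (ne_of_lt hk')
      · subst h; omega
      · exact absurd (hkl' k h) (ne_of_lt hk)

/-- any representation of `α•u` is either the pure `y`-monomial `yᵘ` or `≻` it. -/
lemma min_rep_pure (hα : 0 < α) (hdeg : ∀ i, ∑ j, a i j = α)
    (u : Fin d → ℕ) (σ : Fin (c + d) →₀ ℕ)
    (hσ : valE c d α a σ = fun j => α * u j) :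
    σ = yMon c u ∨ grevlex (yMon c u) σ := by
  by_cases heq : σ = yMon c u
  · exact Or.inl heq
  right
  -- degrees agree
  have hdσ : α * degE σ = α * (∑ j, u j) := by
    rw [← sum_valE a hdeg σ, hσ]; rw [Finset.mul_sum]
  have hdeq : degE (yMon c (d := d) u) = degE σ := by
    rw [degE_yMon]
    exact (Nat.eq_of_mul_eq_mul_left hα hdσ).symm
  refine Or.inr ⟨hdeq, ?_⟩
  have hne : ∃ v, σ v ≠ (yMon c u) v := by
    by_contra h
    push_neg at h
    exact heq (Finsupp.ext h)
  obtain ⟨k, hkmem, hlast⟩ := exists_last_diff hne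
  refine ⟨k, ?_, fun l hl => (hlast l hl).symm⟩
  rcases lt_or_gt_of_ne hkmem with hcase | hcase
  · exact hcase
  exfalso
  revert hlast hkmem hcase
  induction k using Fin.addCases with
  | left i =>
    intro _hne hall hgt
    have hy : ∀ j : Fin d, σ (Fin.natAdd c j) = u j := by
      intro j
      have hlt : (Fin.castAdd d i : Fin (c + d)) < Fin.natAdd c j := by
        simp only [Fin.lt_def, Fin.coe_castAdd, Fin.coe_natAdd]
        omega
      have := hall _ hlt
      simpa using this
    have hpos : 0 < σ (Fin.castAdd d i) := by
      simpa using hgt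
    have hgt : degE σ > ∑ j, u j := by
      rw [degE_split]
      have h1 : ∑ j, σ (Fin.natAdd c j) = ∑ j, u j :=
        Finset.sum_congr rfl fun j _ => hy j
      have h2 : 0 < ∑ i', σ (Fin.castAdd d i') :=
        lt_of_lt_of_le hpos (Finset.single_le_sum (f := fun i' => σ (Fin.castAdd d i'))
          (fun _ _ => Nat.zero_le _) (Finset.mem_univ i))
      omega
    rw [degE_yMon] at hdeq
    omega
  | right j =>
    intro _hne _hall hgt
    have hνj : u j < σ (Fin.natAdd c j) := by simpa using hgt
    have hco := congrFun hσ j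
    rw [valE_apply] at hco
    have hle : α * σ (Fin.natAdd c j) ≤ α * u j := by omega
    have := Nat.le_of_mul_le_mul_left hle hα
    omega

lemma eVec_mem_Amon (i : Fin d) : eVec d α i ∈ Amon d α :=
  AddSubmonoid.subset_closure ⟨i, rfl⟩

lemma Amon_decomp {z : Fin d → ℕ} (hz : z ∈ Amon d α) :
    ∃ w : Fin d → ℕ, z = fun j => α * w j := by
  induction hz using AddSubmonoid.closure_induction with
  | mem x hx =>
    obtain ⟨i, rfl⟩ := hx
    exact ⟨fun j => if j = i then 1 else 0, by
      funext j
      by_cases h : j = i <;> simp [eVec, h]⟩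
  | zero => exact ⟨0, by funext j; simp⟩
  | add x y _ _ hx hy =>
    obtain ⟨w₁, rfl⟩ := hx
    obtain ⟨w₂, rfl⟩ := hy
    exact ⟨w₁ + w₂, by funext j; simp [Pi.add_apply, mul_add]⟩

lemma alpha_smul_mem_Amon (w : Fin d → ℕ) : (fun j => α * w j) ∈ Amon d α := by
  have : (fun j => α * w j) = ∑ i : Fin d, w i • eVec d α i := by
    funext j
    rw [Finset.sum_apply]
    rw [Finset.sum_eq_single j]
    · simp [eVec, mul_comm]
    · intro b _ hb
      simp only [Pi.smul_apply, eVec, smul_eq_mul]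
      rw [if_neg (fun hh => hb hh.symm), mul_zero]
    · simp
  rw [this]
  exact AddSubmonoid.sum_mem _ (fun i _ => nsmul_mem (eVec_mem_Amon i) _)

/-- ltCls is trichotomous. -/
lemma ltCls_trichotomy {x y : Fin d → ℕ} (h : x ≠ y) : ltCls x y ∨ ltCls y x := by
  have hne : ∃ j, x j ≠ y j := by
    by_contra hc; push_neg at hc; exact h (funext hc)
  obtain ⟨k, hkmem, hlast⟩ := exists_last_diff hne
  rcases lt_or_gt_of_ne hkmem with hlt | hgt
  · exact Or.inl ⟨k, hlt, hlast⟩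
  · exact Or.inr ⟨k, hgt, fun l hl => (hlast l hl).symm⟩

/-- a finite nonempty set has a ltCls-minimum. -/
lemma exists_ltCls_min (S : Set (Fin d → ℕ)) (hfin : S.Finite) (hne : S.Nonempty) :
    ∃ g ∈ S, ∀ g' ∈ S, g' ≠ g → ltCls g g' := by
  classical
  set f : (Fin d → ℕ) → Lex (Fin d → ℕ) := fun x => toLex (fun k => x (Fin.rev k)) with hf
  have key : ∀ x y : Fin d → ℕ, ltCls x y ↔ f x < f y := by
    intro x y
    constructor
    · rintro ⟨k, hk, hkl⟩
      refine ⟨Fin.rev k, ?_, by simpa [hf] using hk⟩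
      intro j hj
      have : k < Fin.rev j := by
        have := Fin.rev_lt_rev.mpr hj
        rwa [Fin.rev_rev] at this
      simpa [hf] using hkl _ this
    · rintro ⟨i, hil, hi⟩
      refine ⟨Fin.rev i, by simpa [hf] using hi, ?_⟩
      intro l hl
      have : Fin.rev l < i := by
        have := Fin.rev_lt_rev.mpr hl
        rwa [Fin.rev_rev] at this
      have := hil _ this
      simpa [hf, Fin.rev_rev] using this
  letI : LinearOrder (Lex (Fin d → ℕ)) :=
    @Pi.Lex.linearOrder (Fin d) (fun _ => ℕ) _ Finite.to_wellFoundedLT _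
  obtain ⟨g, hg, hmin⟩ := Finset.exists_min_image hfin.toFinset f
    (by rwa [Set.Finite.toFinset_nonempty])
  refine ⟨g, hfin.mem_toFinset.mp hg, ?_⟩
  intro g' hg' hne'
  rcases ltCls_trichotomy hne' with h | h
  · exact absurd ((key _ _).mp h) (not_lt.mpr (hmin g' (hfin.mem_toFinset.mpr hg')))
  · exact h


lemma ltCls_asymm {x y : Fin d → ℕ} (h1 : ltCls x y) (h2 : ltCls y x) : False := by
  obtain ⟨k, hk, hkl⟩ := h1
  obtain ⟨k', hk', hkl'⟩ := h2
  rcases lt_trichotomy k k' with h | h | h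
  · exact absurd (hkl k' h) (ne_of_gt hk')
  · subst h; omega
  · exact absurd (hkl' k h) (ne_of_gt hk)

lemma m_pure (hα : 0 < α) (B : AddSubmonoid (Fin d → ℕ))
    (hAB : Amon d α ≤ B)
    (hdeg : ∀ i, ∑ j, a i j = α)
    (m : (Fin d → ℕ) → (Fin (c + d) →₀ ℕ))
    (hmval : ∀ b ∈ B, valE c d α a (m b) = b)
    (hmmin : ∀ b ∈ B, ∀ σ, valE c d α a σ = b → m b = σ ∨ grevlex (m b) σ)
    (u : Fin d → ℕ) : m (fun j => α * u j) = yMon c u := by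
  have hmem : (fun j => α * u j) ∈ B := hAB (alpha_smul_mem_Amon u)
  have h1 := hmval _ hmem
  have h2 := hmmin _ hmem (yMon c u) (valE_yMon a u)
  rcases min_rep_pure a hα hdeg u (m _) h1 with h | h
  · exact h
  rcases h2 with h2 | h2
  · exact h2
  · exact (grevlex_asymm h2 h).elim

end SimplicialToric


/-- For an equivalence class `Γ` of `B_A` and every `b ∈ Γ + A`,
there is a unique monomial in `M_Γ` representing `b`. -/
theorem MGamma_unique_repr
    (c d α : ℕ) (hα : 0 < α)
    (a : Fin c → Fin d → ℕ) (B : AddSubmonoid (Fin d → ℕ))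
    (hBgen : B = AddSubmonoid.closure (Set.range a ∪ Set.range (eVec d α)))
    (hhilb : Hilb B = Set.range a ∪ Set.range (eVec d α))
    (hdeg : ∀ i, ∑ j, a i j = α)
    (m : (Fin d → ℕ) → (Fin (c + d) →₀ ℕ))
    (hmval : ∀ b ∈ B, valE c d α a (m b) = b)
    (hmmin : ∀ b ∈ B, ∀ σ, valE c d α a σ = b → m b = σ ∨ grevlex (m b) σ)
    (Γ : Set (Fin d → ℕ)) (hΓ : IsClass B α Γ) :
    ∀ b : Fin d → ℕ, (∃ g ∈ Γ, ∃ z ∈ Amon d α, b = g + z) →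
      ∃! σ : Fin (c + d) →₀ ℕ, σ ∈ MGamma c d α m Γ ∧ valE c d α a σ = b := by
  classical
  intro b hb
  obtain ⟨g₀, hg₀Γ, z, hz, hbz⟩ := hb
  obtain ⟨x₀, hx₀, hΓeq⟩ := hΓ
  have hΓBA : ∀ g' ∈ Γ, g' ∈ BA B α := fun g' hg' => by
    rw [hΓeq] at hg'; exact hg'.1
  have hΓB : ∀ g' ∈ Γ, g' ∈ B := fun g' hg' => (hΓBA g' hg').1
  have hAB : Amon d α ≤ B := by
    rw [hBgen]; exact AddSubmonoid.closure_mono Set.subset_union_right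
  have hRel : ∀ g' ∈ Γ, ∀ g'' ∈ Γ, Rel α g' g'' := by
    intro g' hg' g'' hg''
    rw [hΓeq] at hg' hg''
    intro j
    have h1 := hg'.2 j
    have h2 := hg''.2 j
    have he : (g' j : ℤ) - g'' j = ((x₀ j : ℤ) - g'' j) - ((x₀ j : ℤ) - g' j) := by ring
    rw [he]; exact dvd_sub h2 h1
  obtain ⟨w₀, hw₀⟩ := Amon_decomp hz
  have hb₀ : ∀ j, b j = g₀ j + α * w₀ j := by
    intro j; rw [hbz, hw₀]; rfl
  set S : Set (Fin d → ℕ) := {g' | g' ∈ Γ ∧ ∀ j, g' j ≤ b j} with hSdef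
  have hSfin : S.Finite := by
    refine (Set.finite_Iic b).subset ?_
    intro g' hg'
    simp only [Set.mem_Iic, Pi.le_def]
    exact hg'.2
  have hg₀S : g₀ ∈ S := ⟨hg₀Γ, fun j => by have := hb₀ j; omega⟩
  obtain ⟨g, hgS, hgmin⟩ := exists_ltCls_min S hSfin ⟨g₀, hg₀S⟩
  have hgΓ : g ∈ Γ := hgS.1
  -- decomposition of b over any element of S
  have hdecomp : ∀ g' ∈ S, ∃ w : Fin d → ℕ, ∀ j, b j = g' j + α * w j := by
    intro g' hg'
    have key : ∀ j, α ∣ b j - g' j := by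
      intro j
      have hle : g' j ≤ b j := hg'.2 j
      have h1 : (α : ℤ) ∣ (g₀ j : ℤ) - g' j := hRel g₀ hg₀Γ g' hg'.1 j
      have h2 : (b j : ℤ) = (g₀ j : ℤ) + α * w₀ j := by
        have := hb₀ j; exact_mod_cast congrArg (Nat.cast : ℕ → ℤ) this
      have h3 : (α : ℤ) ∣ (b j : ℤ) - g' j := by
        rw [h2]
        have he : (g₀ j : ℤ) + α * w₀ j - g' j = ((g₀ j : ℤ) - g' j) + α * w₀ j := by
          ring
        rw [he]
        exact dvd_add h1 ⟨w₀ j, rfl⟩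
      have h4 : (α : ℤ) ∣ ((b j - g' j : ℕ) : ℤ) := by
        rwa [Nat.cast_sub hle]
      exact_mod_cast h4
    refine ⟨fun j => (b j - g' j) / α, fun j => ?_⟩
    have hle := hg'.2 j
    have he : b j = g' j + (b j - g' j) := by omega
    conv_lhs => rw [he]
    rw [Nat.mul_div_cancel' (key j)]
  -- joins of elements of Γ are in αℕ^d
  have hjoin : ∀ g' ∈ Γ, ∀ g'' ∈ Γ, ∃ u : Fin d → ℕ,
      joinSub g' g'' = fun j => α * u j := by
    intro g' hg' g'' hg''
    refine ⟨fun j => (max (g' j) (g'' j) - g'' j) / α, ?_⟩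
    funext j
    have hdvd : α ∣ max (g' j) (g'' j) - g'' j := by
      rcases le_or_gt (g' j) (g'' j) with h | h
      · rw [max_eq_right h]
        simp
      · rw [max_eq_left h.le]
        have h1 : (α : ℤ) ∣ (g' j : ℤ) - g'' j := hRel g' hg' g'' hg'' j
        have h4 : (α : ℤ) ∣ ((g' j - g'' j : ℕ) : ℤ) := by rwa [Nat.cast_sub h.le]
        exact_mod_cast h4
    exact (Nat.mul_div_cancel' hdvd).symm
  obtain ⟨w, hw⟩ := hdecomp g hgS
  have hvalσ : valE c d α a (m g + yMon c w) = b := by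
    rw [valE_add, hmval g (hΓB g hgΓ), valE_yMon]
    funext j
    exact (hw j).symm
  have hmem : (m g + yMon c w) ∈ MGamma c d α m Γ := by
    refine ⟨g, hgΓ, ⟨yMon c w, yOnly_yMon w, rfl⟩, ?_⟩
    rintro g' hg'Γ hlt ⟨τ'', hτ''y, hστ⟩
    obtain ⟨u, hu⟩ := hjoin g' hg'Γ g hgΓ
    have hjB : joinSub g' g ∈ B := hAB (hu ▸ alpha_smul_mem_Amon u)
    have hvj : valE c d α a (m (joinSub g' g)) = joinSub g' g := hmval _ hjB
    have hval2 : valE c d α a ((m g + m (joinSub g' g)) + τ'') = b := by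
      rw [← hστ]; exact hvalσ
    rw [valE_add, valE_add, hmval g (hΓB g hgΓ), hvj] at hval2
    have hble : ∀ j, g' j ≤ b j := by
      intro j
      have hj := congrFun hval2 j
      simp only [Pi.add_apply] at hj
      have hjs : joinSub g' g j = max (g' j) (g j) - g j := rfl
      rw [hjs] at hj
      have hmax : g' j ≤ max (g' j) (g j) := le_max_left _ _
      omega
    have hg'S : g' ∈ S := ⟨hg'Γ, hble⟩
    have hne : g' ≠ g := by
      rintro rfl
      obtain ⟨k, hk, -⟩ := hlt
      omega
    exact ltCls_asymm hlt (hgmin g' hg'S hne)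
  refine ⟨m g + yMon c w, ⟨hmem, hvalσ⟩, ?_⟩
  rintro σ' ⟨⟨g₂, hg₂Γ, ⟨τ, hτy, rfl⟩, hneg⟩, hval'⟩
  have hτeq : τ = yMon c (fun j => τ (Fin.natAdd c j)) := eq_yMon_of_yOnly hτy
  set w₂ : Fin d → ℕ := fun j => τ (Fin.natAdd c j) with hw₂def
  have hb₂ : ∀ j, b j = g₂ j + α * w₂ j := by
    intro j
    rw [hτeq] at hval'
    rw [valE_add, hmval g₂ (hΓB g₂ hg₂Γ), valE_yMon] at hval'
    have hj := congrFun hval' j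
    simpa using hj.symm
  have hg₂S : g₂ ∈ S := ⟨hg₂Γ, fun j => by have := hb₂ j; omega⟩
  by_cases hgg : g₂ = g
  · subst hgg
    have hw2w : w₂ = w := by
      funext j
      have h1 := hb₂ j
      have h2 := hw j
      exact Nat.eq_of_mul_eq_mul_left hα (by omega)
    rw [hτeq, hw2w]
  · exfalso
    apply hneg g hgΓ (hgmin g₂ hg₂S hgg)
    obtain ⟨u, hu⟩ := hjoin g hgΓ g₂ hg₂Γ
    have hmj : m (joinSub g g₂) = yMon c u := by
      rw [hu]
      exact m_pure a hα B hAB hdeg m hmval hmmin u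
    have hule : ∀ j, u j ≤ w₂ j := by
      intro j
      have h1 : α * u j = max (g j) (g₂ j) - g₂ j := (congrFun hu j).symm
      have hmax : max (g j) (g₂ j) ≤ b j := max_le (hgS.2 j) (hg₂S.2 j)
      have h2 := hb₂ j
      have h3 : α * u j ≤ α * w₂ j := by omega
      exact Nat.le_of_mul_le_mul_left h3 hα
    refine ⟨yMon c (fun j => w₂ j - u j), yOnly_yMon _, ?_⟩
    have harg : w₂ = u + fun j => w₂ j - u j := funext fun j => by
      have := hule j
      simp only [Pi.add_apply]
      omega
    rw [hτeq, hmj, add_assoc, ← yMon_add, ← harg]
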